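/- Let x be the output of Algorithm FractionalKnapsack with sample size t ∈ {1,…,n−1}, where the permutation π is chosen uniformly at random among all permutations of [n]. Then for every item j ∈ [n], E[x_j] ≥ (x̃_j([n])/n) · Σ_{ℓ=t+1}^n t/(ℓ−1), where x̃([n]) is the fractional greedy solution of all n items. -/

import Mathlib

/-- The fractional greedy solution of the sub-instance on item set `Q`:
since the densities are strictly decreasing in the index, the items of `Q` are
packed greedily in increasing index order (= decreasing density order) until the
capacity `C` is exhausted; the first item that does not fully fit is packed
fractionally, all later items of `Q` get fraction `0`, and items outside `Q` get `0`. -/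
noncomputable def greedySol (n : ℕ) (C : ℝ) (s : Fin n → ℝ) (Q : Finset (Fin n)) (j : Fin n) : ℝ :=
  if j ∈ Q then
    (min C (∑ k ∈ Q.filter (fun k => k ≤ j), s k)
      - min C (∑ k ∈ Q.filter (fun k => k < j), s k)) / s j
  else 0

/-- `Qset π ℓ` is the set `Q_ℓ` of items revealed in the first `ℓ` rounds
(rounds are indexed `0,…,n−1`, so round `ℓ₀ : Fin n` is round `ℓ₀+1` in 1-based counting). -/
def Qset (n : ℕ) (π : Equiv.Perm (Fin n)) (ℓ : ℕ) : Finset (Fin n) :=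
  (Finset.univ.filter (fun k : Fin n => (k : ℕ) < ℓ)).image π

open Finset Equiv

lemma min_diff_mono (a A B C : ℝ) (ha : 0 ≤ a) (hAB : A ≤ B) :
    min C (B + a) - min C B ≤ min C (A + a) - min C A := by
  rcases min_cases C (B + a) with ⟨h1, h1'⟩ | ⟨h1, h1'⟩ <;>
    rcases min_cases C B with ⟨h2, h2'⟩ | ⟨h2, h2'⟩ <;>
    rcases min_cases C (A + a) with ⟨h3, h3'⟩ | ⟨h3, h3'⟩ <;>
    rcases min_cases C A with ⟨h4, h4'⟩ | ⟨h4, h4'⟩ <;> linarith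

lemma filter_le_eq (n : ℕ) (Q : Finset (Fin n)) (j : Fin n) (hj : j ∈ Q) :
    Q.filter (fun k => k ≤ j) = insert j (Q.filter (fun k => k < j)) := by
  ext k
  simp only [Finset.mem_filter, Finset.mem_insert]
  constructor
  · rintro ⟨hk, hle⟩
    rcases lt_or_eq_of_le hle with h | h
    · exact Or.inr ⟨hk, h⟩
    · exact Or.inl h
  · rintro (rfl | ⟨hk, hlt⟩)
    · exact ⟨hj, le_refl _⟩
    · exact ⟨hk, le_of_lt hlt⟩

lemma sum_le_split (n : ℕ) (s : Fin n → ℝ) (Q : Finset (Fin n)) (j : Fin n) (hj : j ∈ Q) :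
    ∑ k ∈ Q.filter (fun k => k ≤ j), s k
      = (∑ k ∈ Q.filter (fun k => k < j), s k) + s j := by
  rw [filter_le_eq n Q j hj, Finset.sum_insert (by simp)]
  ring

lemma greedySol_mono (n : ℕ) (C : ℝ) (s : Fin n → ℝ) (hs : ∀ i, 0 < s i)
    (Q Q' : Finset (Fin n)) (hQQ : Q ⊆ Q') (j : Fin n) (hj : j ∈ Q) :
    greedySol n C s Q' j ≤ greedySol n C s Q j := by
  unfold greedySol
  rw [if_pos hj, if_pos (hQQ hj)]
  apply div_le_div_of_nonneg_right ?_ (le_of_lt (hs j))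
  rw [sum_le_split n s Q j hj, sum_le_split n s Q' j (hQQ hj)]
  have hAB : ∑ k ∈ Q.filter (fun k => k < j), s k ≤ ∑ k ∈ Q'.filter (fun k => k < j), s k :=
    Finset.sum_le_sum_of_subset_of_nonneg (Finset.filter_subset_filter _ hQQ)
      (fun i _ _ => le_of_lt (hs i))
  exact min_diff_mono (s j) _ _ C (le_of_lt (hs j)) hAB

lemma greedySol_nonneg (n : ℕ) (C : ℝ) (s : Fin n → ℝ) (hs : ∀ i, 0 < s i)
    (Q : Finset (Fin n)) (j : Fin n) : 0 ≤ greedySol n C s Q j := by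
  unfold greedySol
  split
  · rename_i hj
    apply div_nonneg _ (le_of_lt (hs j))
    rw [sub_nonneg, sum_le_split n s Q j hj]
    exact min_le_min (le_refl C) (by linarith [(hs j).le])
  · exact le_refl 0

lemma greedySol_sum (n : ℕ) (C : ℝ) (hC : 0 ≤ C) (s : Fin n → ℝ) (hs : ∀ i, 0 < s i)
    (Q : Finset (Fin n)) :
    ∑ i ∈ Q, s i * greedySol n C s Q i = min C (∑ i ∈ Q, s i) := by
  induction Q using Finset.induction_on_max with
  | empty => simp [hC]
  | insert a Q' ha ih =>
    have haQ : a ∉ Q' := fun h => lt_irrefl a (ha a h)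
    have key : ∀ i ∈ Q', greedySol n C s (insert a Q') i = greedySol n C s Q' i := by
      intro i hi
      unfold greedySol
      rw [if_pos (Finset.mem_insert_of_mem hi), if_pos hi]
      have h1 : (insert a Q').filter (fun k => k ≤ i) = Q'.filter (fun k => k ≤ i) := by
        rw [Finset.filter_insert, if_neg (not_le.mpr (ha i hi))]
      have h2 : (insert a Q').filter (fun k => k < i) = Q'.filter (fun k => k < i) := by
        rw [Finset.filter_insert, if_neg (lt_asymm (ha i hi))]
      rw [h1, h2]
    have hfa1 : (insert a Q').filter (fun k => k ≤ a) = insert a Q' := by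
      apply Finset.filter_true_of_mem
      intro x hx
      rcases Finset.mem_insert.mp hx with rfl | h
      · exact le_refl _
      · exact (ha x h).le
    have hfa2 : (insert a Q').filter (fun k => k < a) = Q' := by
      rw [Finset.filter_insert, if_neg (lt_irrefl a)]
      exact Finset.filter_true_of_mem (fun x hx => ha x hx)
    have hga : greedySol n C s (insert a Q') a
        = (min C (∑ i ∈ insert a Q', s i) - min C (∑ i ∈ Q', s i)) / s a := by
      unfold greedySol
      rw [if_pos (Finset.mem_insert_self a Q'), hfa1, hfa2]
    have hsum : ∑ x ∈ Q', s x * greedySol n C s (insert a Q') x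
        = ∑ x ∈ Q', s x * greedySol n C s Q' x :=
      Finset.sum_congr rfl (fun i hi => by rw [key i hi])
    rw [Finset.sum_insert haQ, Finset.sum_insert haQ, hga,
      mul_div_cancel₀ _ (ne_of_gt (hs a)), hsum, ih, Finset.sum_insert haQ]
    ring

lemma erase_diff_le (n : ℕ) (C : ℝ) (hC : 0 ≤ C) (s : Fin n → ℝ) (hs : ∀ i, 0 < s i)
    (Q : Finset (Fin n)) (j : Fin n) (hj : j ∈ Q) :
    ∑ i ∈ Q.erase j, s i * (greedySol n C s (Q.erase j) i - greedySol n C s Q i)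
      ≤ s j * greedySol n C s Q j := by
  have h1 := greedySol_sum n C hC s hs (Q.erase j)
  have h2 := greedySol_sum n C hC s hs Q
  have h3 : ∑ i ∈ Q, s i * greedySol n C s Q i
      = s j * greedySol n C s Q j + ∑ i ∈ Q.erase j, s i * greedySol n C s Q i :=
    (Finset.add_sum_erase _ _ hj).symm
  have h4 : ∑ i ∈ Q.erase j, s i ≤ ∑ i ∈ Q, s i :=
    Finset.sum_le_sum_of_subset_of_nonneg (Finset.erase_subset _ _) (fun i _ _ => (hs i).le)
  have h5 : min C (∑ i ∈ Q.erase j, s i) ≤ min C (∑ i ∈ Q, s i) := min_le_min le_rfl h4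
  simp only [mul_sub, Finset.sum_sub_distrib]
  linarith

open Finset Equiv

lemma Qset_mul_swap (n : ℕ) (π : Equiv.Perm (Fin n)) (m : ℕ) (k1 k2 : Fin n)
    (h1 : (k1 : ℕ) < m) (h2 : (k2 : ℕ) < m) :
    Qset n (π * Equiv.swap k1 k2) m = Qset n π m := by
  unfold Qset
  have hcoe : ⇑(π * Equiv.swap k1 k2) = ⇑π ∘ ⇑(Equiv.swap k1 k2) := rfl
  rw [hcoe, ← Finset.image_image]
  congr 1
  apply Finset.Subset.antisymm
  · intro x hx
    rw [Finset.mem_image] at hx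
    obtain ⟨y, hy, rfl⟩ := hx
    rw [Finset.mem_filter] at hy ⊢
    refine ⟨Finset.mem_univ _, ?_⟩
    rw [Equiv.swap_apply_def]
    split_ifs <;> simp_all
  · intro x hx
    rw [Finset.mem_image]
    refine ⟨Equiv.swap k1 k2 x, ?_, Equiv.swap_apply_self _ _ _⟩
    rw [Finset.mem_filter] at hx ⊢
    refine ⟨Finset.mem_univ _, ?_⟩
    rw [Equiv.swap_apply_def]
    split_ifs <;> simp_all

lemma Qset_succ (n : ℕ) (π : Equiv.Perm (Fin n)) (j : Fin n) (ℓ : ℕ)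
    (hℓ : (π.symm j : ℕ) = ℓ) :
    Qset n π (ℓ + 1) = insert j (Qset n π ℓ) ∧ j ∉ Qset n π ℓ := by
  constructor
  · unfold Qset
    have hfil : (Finset.univ.filter (fun k : Fin n => (k : ℕ) < ℓ + 1))
        = insert (π.symm j) (Finset.univ.filter (fun k : Fin n => (k : ℕ) < ℓ)) := by
      ext k
      simp only [Finset.mem_filter, Finset.mem_insert, Finset.mem_univ, true_and]
      constructor
      · intro hk
        rcases Nat.lt_succ_iff_lt_or_eq.mp hk with h | h
        · exact Or.inr h
        · left; apply Fin.ext; rw [hℓ]; exact h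
      · rintro (rfl | h)
        · omega
        · omega
    rw [hfil, Finset.image_insert, Equiv.apply_symm_apply]
  · unfold Qset
    rw [Finset.mem_image]
    rintro ⟨y, hy, hyj⟩
    rw [Finset.mem_filter] at hy
    have : y = π.symm j := by rw [← hyj, Equiv.symm_apply_apply]
    omega

lemma card_fiber (n : ℕ) (hn : 0 < n) (j i : Fin n) :
    (Finset.univ.filter (fun π : Equiv.Perm (Fin n) => π i = j)).card = (n - 1).factorial := by
  classical
  have hconst : ∀ b : Fin n,
      (Finset.univ.filter (fun π : Equiv.Perm (Fin n) => π i = b)).card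
        = (Finset.univ.filter (fun π : Equiv.Perm (Fin n) => π i = j)).card := by
    intro b
    apply Finset.card_bij' (fun π _ => Equiv.swap b j * π) (fun π _ => Equiv.swap b j * π)
    · intro π hπ
      rw [Finset.mem_filter] at hπ ⊢
      refine ⟨Finset.mem_univ _, ?_⟩
      simp [Equiv.Perm.mul_apply, hπ.2]
    · intro π hπ
      rw [Finset.mem_filter] at hπ ⊢
      refine ⟨Finset.mem_univ _, ?_⟩
      simp [Equiv.Perm.mul_apply, hπ.2]
    · intro π hπ
      rw [← mul_assoc, Equiv.swap_mul_self, one_mul]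
    · intro π hπ
      rw [← mul_assoc, Equiv.swap_mul_self, one_mul]
  have hsum : (Finset.univ : Finset (Equiv.Perm (Fin n))).card
      = ∑ b : Fin n, (Finset.univ.filter (fun π : Equiv.Perm (Fin n) => π i = b)).card :=
    Finset.card_eq_sum_card_fiberwise (fun x _ => Finset.mem_univ (x i))
  rw [Finset.card_univ, Fintype.card_perm, Fintype.card_fin] at hsum
  simp only [hconst, Finset.sum_const, Finset.card_univ, Fintype.card_fin, smul_eq_mul] at hsum
  have hfac : n * (n - 1).factorial = n.factorial := Nat.mul_factorial_pred hn.ne'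
  rw [← hfac] at hsum
  exact (Nat.eq_of_mul_eq_mul_left hn hsum).symm

/-- The output of Algorithm `FractionalKnapsack` with sample size `t`:
`x_{π(ℓ)} = 0` for the sample rounds `ℓ ≤ t` (0-based: rounds `< t`) and, for a later
round `ℓ`, `x_{π(ℓ)} = x̃_{π(ℓ)}(Q_ℓ) − (1/s_{π(ℓ)}) Σ_{k=t+1}^{ℓ−1} s_{π(k)} (x̃_{π(k)}(Q_{ℓ−1}) − x̃_{π(k)}(Q_ℓ))`. -/
noncomputable def algFK (n : ℕ) (C : ℝ) (s : Fin n → ℝ) (π : Equiv.Perm (Fin n)) (t : ℕ)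
    (j : Fin n) : ℝ :=
  if (π.symm j : ℕ) < t then 0 else
    greedySol n C s (Qset n π ((π.symm j : ℕ) + 1)) j
      - (∑ k ∈ Finset.univ.filter
            (fun k : Fin n => t ≤ (k : ℕ) ∧ (k : ℕ) < (π.symm j : ℕ)),
          s (π k) * (greedySol n C s (Qset n π (π.symm j : ℕ)) (π k)
            - greedySol n C s (Qset n π ((π.symm j : ℕ) + 1)) (π k))) / s j

section RoundBound

variable (n : ℕ) (C : ℝ) (s : Fin n → ℝ)

/-- the summand in the correction term -/
noncomputable def fcor (ℓ : ℕ) (π : Equiv.Perm (Fin n)) (k : Fin n) : ℝ :=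
  s (π k) * (greedySol n C s (Qset n π ℓ) (π k)
            - greedySol n C s (Qset n π (ℓ + 1)) (π k))

lemma fiber_symmetry (hC : 0 < C) (ℓ : ℕ) (hℓn : ℓ < n) (j : Fin n)
    (k1 k2 : Fin n) (hk1 : (k1 : ℕ) < ℓ) (hk2 : (k2 : ℕ) < ℓ) :
    ∑ π ∈ Finset.univ.filter (fun π : Equiv.Perm (Fin n) => ((π.symm j : ℕ) = ℓ)),
        fcor n C s ℓ π k1
      = ∑ π ∈ Finset.univ.filter (fun π : Equiv.Perm (Fin n) => ((π.symm j : ℕ) = ℓ)),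
        fcor n C s ℓ π k2 := by
  have hsymm : ∀ π : Equiv.Perm (Fin n),
      ((π * Equiv.swap k1 k2).symm) j = Equiv.swap k1 k2 (π.symm j) := by
    intro π
    rw [Equiv.Perm.mul_def, Equiv.symm_trans_apply, Equiv.symm_swap]
  have hmem : ∀ π : Equiv.Perm (Fin n), ((π.symm j : ℕ) = ℓ) →
      (((π * Equiv.swap k1 k2).symm j : ℕ) = ℓ) := by
    intro π hπ2
    have hne1 : π.symm j ≠ k1 := fun h => by rw [h] at hπ2; omega
    have hne2 : π.symm j ≠ k2 := fun h => by rw [h] at hπ2; omega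
    rw [hsymm π, Equiv.swap_apply_of_ne_of_ne hne1 hne2]
    exact hπ2
  apply Finset.sum_nbij' (fun π => π * Equiv.swap k1 k2) (fun π => π * Equiv.swap k1 k2)
  · intro π hπ
    rw [Finset.mem_filter] at hπ ⊢
    exact ⟨Finset.mem_univ _, hmem π hπ.2⟩
  · intro π hπ
    rw [Finset.mem_filter] at hπ ⊢
    exact ⟨Finset.mem_univ _, hmem π hπ.2⟩
  · intro π hπ
    rw [mul_assoc, Equiv.swap_mul_self, mul_one]
  · intro π hπ
    rw [mul_assoc, Equiv.swap_mul_self, mul_one]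
  · intro π hπ
    rw [Finset.mem_filter] at hπ
    unfold fcor
    rw [Qset_mul_swap n π ℓ k1 k2 hk1 hk2,
        Qset_mul_swap n π (ℓ+1) k1 k2 (Nat.lt_succ_of_lt hk1) (Nat.lt_succ_of_lt hk2)]
    have : (π * Equiv.swap k1 k2) k2 = π k1 := by
      rw [Equiv.Perm.mul_apply, Equiv.swap_apply_right]
    rw [this]

lemma card_filter_val (m : ℕ) (p : ℕ → Prop) [DecidablePred p] :
    (Finset.univ.filter (fun k : Fin m => p (k : ℕ))).card
      = ((Finset.range m).filter p).card := by
  refine Finset.card_bij (fun k _ => (k : ℕ)) ?_ ?_ ?_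
  · intro k hk
    rw [Finset.mem_filter] at hk ⊢
    exact ⟨Finset.mem_range.mpr k.isLt, hk.2⟩
  · intro a _ b _ h
    exact Fin.ext h
  · intro b hb
    rw [Finset.mem_filter, Finset.mem_range] at hb
    exact ⟨⟨b, hb.1⟩, Finset.mem_filter.mpr ⟨Finset.mem_univ _, hb.2⟩, rfl⟩

lemma round_bound (hC : 0 < C) (hs : ∀ i, 0 < s i)
    (t ℓ : ℕ) (ht1 : 1 ≤ t) (htℓ : t ≤ ℓ) (hℓn : ℓ < n) (j : Fin n) :
    (t : ℝ) / (ℓ : ℝ) * ((n - 1).factorial : ℝ) * greedySol n C s Finset.univ j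
      ≤ ∑ π ∈ Finset.univ.filter (fun π : Equiv.Perm (Fin n) => ((π.symm j : ℕ) = ℓ)),
          algFK n C s π t j := by
  classical
  have hℓ0 : 0 < ℓ := lt_of_lt_of_le ht1 htℓ
  have hn0 : 0 < n := lt_trans hℓ0 hℓn
  set A := Finset.univ.filter (fun π : Equiv.Perm (Fin n) => ((π.symm j : ℕ) = ℓ)) with hA
  set K := Finset.univ.filter (fun k : Fin n => t ≤ (k : ℕ) ∧ (k : ℕ) < ℓ) with hK
  set K' := Finset.univ.filter (fun k : Fin n => (k : ℕ) < ℓ) with hK'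
  set k0 : Fin n := ⟨0, hn0⟩ with hk0
  set c := ∑ π ∈ A, fcor n C s ℓ π k0 with hc
  set S := ∑ π ∈ A, greedySol n C s (Qset n π (ℓ + 1)) j with hSdef
  have hAmem : ∀ π ∈ A, (π.symm j : ℕ) = ℓ := fun π hπ => (Finset.mem_filter.mp hπ).2
  -- expansion of algFK on the fiber
  have hexp : ∀ π ∈ A, algFK n C s π t j
      = greedySol n C s (Qset n π (ℓ + 1)) j - (∑ k ∈ K, fcor n C s ℓ π k) / s j := by
    intro π hπ
    have h2 := hAmem π hπ
    simp only [algFK, fcor, h2, hK, if_neg (by omega : ¬ ℓ < t)]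
  -- each column sum equals c
  have hKc : ∀ k : Fin n, (k : ℕ) < ℓ → ∑ π ∈ A, fcor n C s ℓ π k = c := by
    intro k hk
    exact fiber_symmetry n C s hC ℓ hℓn j k k0 hk hℓ0
  -- card of K and K'
  have hcardK : K.card = ℓ - t := by
    rw [hK, card_filter_val n (fun m => t ≤ m ∧ m < ℓ)]
    have : (Finset.range n).filter (fun m => t ≤ m ∧ m < ℓ) = Finset.Ico t ℓ := by
      ext m
      simp only [Finset.mem_filter, Finset.mem_range, Finset.mem_Ico]
      omega
    rw [this, Nat.card_Ico]
  have hcardK' : K'.card = ℓ := by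
    rw [hK', card_filter_val n (fun m => m < ℓ)]
    have : (Finset.range n).filter (fun m => m < ℓ) = Finset.range ℓ := by
      ext m
      simp only [Finset.mem_filter, Finset.mem_range]
      omega
    rw [this, Finset.card_range]
  -- total correction
  have hcorr : ∑ π ∈ A, ∑ k ∈ K, fcor n C s ℓ π k = ((ℓ - t : ℕ) : ℝ) * c := by
    rw [Finset.sum_comm]
    rw [Finset.sum_congr rfl (fun k hk => hKc k (Finset.mem_filter.mp hk).2.2)]
    rw [Finset.sum_const, hcardK, nsmul_eq_mul]
  -- full-column sum
  have hfullsum : ∑ π ∈ A, ∑ k ∈ K', fcor n C s ℓ π k = (ℓ : ℝ) * c := by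
    rw [Finset.sum_comm]
    rw [Finset.sum_congr rfl (fun k hk => hKc k (Finset.mem_filter.mp hk).2)]
    rw [Finset.sum_const, hcardK', nsmul_eq_mul]
  -- per-π bound on full-column sum
  have hfull : ∀ π ∈ A, ∑ k ∈ K', fcor n C s ℓ π k
      ≤ s j * greedySol n C s (Qset n π (ℓ + 1)) j := by
    intro π hπ
    have h2 := hAmem π hπ
    obtain ⟨hins, hnot⟩ := Qset_succ n π j ℓ h2
    have herase : (Qset n π (ℓ + 1)).erase j = Qset n π ℓ := by
      rw [hins, Finset.erase_insert hnot]
    have hjmem : j ∈ Qset n π (ℓ + 1) := by rw [hins]; exact Finset.mem_insert_self _ _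
    have himg : ∑ i ∈ Qset n π ℓ,
        s i * (greedySol n C s (Qset n π ℓ) i - greedySol n C s (Qset n π (ℓ + 1)) i)
        = ∑ k ∈ K', fcor n C s ℓ π k := by
      unfold Qset
      rw [← hK']
      exact Finset.sum_image (fun x _ y _ h => π.injective h)
    have := erase_diff_le n C hC.le s hs (Qset n π (ℓ + 1)) j hjmem
    rw [herase, himg] at this
    exact this
  have hLc : (ℓ : ℝ) * c ≤ s j * S := by
    rw [← hfullsum, hSdef, Finset.mul_sum]
    exact Finset.sum_le_sum hfull
  -- cardinality of the fiber
  have hAcard : A.card = (n - 1).factorial := by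
    rw [hA]
    have heq : Finset.univ.filter (fun π : Equiv.Perm (Fin n) => ((π.symm j : ℕ) = ℓ))
        = Finset.univ.filter (fun π : Equiv.Perm (Fin n) => π ⟨ℓ, hℓn⟩ = j) := by
      apply Finset.filter_congr
      intro π _
      constructor
      · intro h
        have : π.symm j = ⟨ℓ, hℓn⟩ := Fin.ext h
        rw [← this, Equiv.apply_symm_apply]
      · intro h
        have : π.symm j = ⟨ℓ, hℓn⟩ := by rw [← h, Equiv.symm_apply_apply]
        rw [this]
    rw [heq, card_fiber n hn0 j ⟨ℓ, hℓn⟩]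
  -- lower bound on S
  have hgU : 0 ≤ greedySol n C s Finset.univ j := greedySol_nonneg n C s hs Finset.univ j
  have hS : ((n - 1).factorial : ℝ) * greedySol n C s Finset.univ j ≤ S := by
    rw [hSdef]
    calc ((n - 1).factorial : ℝ) * greedySol n C s Finset.univ j
        = ∑ _π ∈ A, greedySol n C s Finset.univ j := by
          rw [Finset.sum_const, hAcard, nsmul_eq_mul]
      _ ≤ ∑ π ∈ A, greedySol n C s (Qset n π (ℓ + 1)) j := by
          apply Finset.sum_le_sum
          intro π hπ
          obtain ⟨hins, _⟩ := Qset_succ n π j ℓ (hAmem π hπ)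
          have hjmem : j ∈ Qset n π (ℓ + 1) := by rw [hins]; exact Finset.mem_insert_self _ _
          exact greedySol_mono n C s hs _ _ (Finset.subset_univ _) j hjmem
  -- final arithmetic
  rw [Finset.sum_congr rfl hexp, Finset.sum_sub_distrib, ← Finset.sum_div, ← hSdef, hcorr]
  have hcast : ((ℓ - t : ℕ) : ℝ) = (ℓ : ℝ) - (t : ℝ) := by
    push_cast [Nat.cast_sub htℓ]; ring
  rw [hcast]
  have hLpos : (0 : ℝ) < (ℓ : ℝ) := by exact_mod_cast hℓ0
  have hsj : (0 : ℝ) < s j := hs j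
  have hTL : (t : ℝ) ≤ (ℓ : ℝ) := by exact_mod_cast htℓ
  have hT0 : (0 : ℝ) < (t : ℝ) := by exact_mod_cast ht1
  have h2 : ((ℓ : ℝ) - t) * ((ℓ : ℝ) * c) ≤ ((ℓ : ℝ) - t) * (s j * S) :=
    mul_le_mul_of_nonneg_left hLc (by linarith)
  have hnum : (t : ℝ) * s j * (((n - 1).factorial : ℝ) * greedySol n C s Finset.univ j)
      ≤ (t : ℝ) * s j * S :=
    mul_le_mul_of_nonneg_left hS (by positivity)
  have expand1 : S - (((ℓ : ℝ) - t) * c) / s j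
      = ((ℓ : ℝ) * s j * S - (ℓ : ℝ) * (((ℓ : ℝ) - t) * c)) / ((ℓ : ℝ) * s j) := by
    field_simp
  have expand2 : (t : ℝ) / (ℓ : ℝ) * ((n - 1).factorial : ℝ) * greedySol n C s Finset.univ j
      = ((t : ℝ) * s j * (((n - 1).factorial : ℝ) * greedySol n C s Finset.univ j))
          / ((ℓ : ℝ) * s j) := by
    field_simp
  rw [expand1, expand2]
  apply div_le_div_of_nonneg_right _ (by positivity)
  nlinarith [h2, hnum]

end RoundBound

/-- Let `x` be the output of Algorithm `FractionalKnapsack` with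
sample size `t ∈ {1,…,n−1}`, where the permutation `π` is chosen uniformly at random
among all `n!` permutations of `[n]`. Then for every item `j`,
`E[x_j] ≥ (x̃_j([n])/n) · Σ_{ℓ=t+1}^n t/(ℓ−1)`, where `x̃([n])` is the fractional
greedy solution of all `n` items. -/
theorem algFK_expected_fraction_bound
    (n : ℕ) (C : ℝ) (hC : 0 < C)
    (v s : Fin n → ℝ)
    (hv : ∀ j, 0 < v j) (hs : ∀ j, 0 < s j ∧ s j ≤ C)
    (hd : ∀ j k : Fin n, j < k → v k / s k < v j / s j)
    (t : ℕ) (ht1 : 1 ≤ t) (ht2 : t < n) (j : Fin n) :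
    (∑ π : Equiv.Perm (Fin n), algFK n C s π t j) / (n.factorial : ℝ)
      ≥ (greedySol n C s Finset.univ j / n)
          * ∑ ℓ ∈ Finset.Icc (t + 1) n, (t : ℝ) / ((ℓ : ℝ) - 1) := by
  classical
  have hspos : ∀ i, 0 < s i := fun i => (hs i).1
  have hn0 : 0 < n := lt_of_le_of_lt (Nat.zero_le t) ht2
  set gU := greedySol n C s Finset.univ j with hgUdef
  have hgU0 : 0 ≤ gU := greedySol_nonneg n C s hspos Finset.univ j
  set F := ((n - 1).factorial : ℝ) with hFdef
  have hFpos : 0 < F := by positivity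
  set N := (n : ℝ) with hNdef
  have hNpos : 0 < N := by rw [hNdef]; exact_mod_cast hn0
  -- fiberwise decomposition
  have hfib : ∑ ℓ ∈ Finset.range n, ∑ π ∈ Finset.univ.filter
        (fun π : Equiv.Perm (Fin n) => ((π.symm j : ℕ) = ℓ)), algFK n C s π t j
      = ∑ π : Equiv.Perm (Fin n), algFK n C s π t j :=
    Finset.sum_fiberwise_of_maps_to (fun π _ => Finset.mem_range.mpr (π.symm j).isLt) _
  -- zero fibers
  have hzero : ∀ ℓ, ℓ < t → (∑ π ∈ Finset.univ.filter
      (fun π : Equiv.Perm (Fin n) => ((π.symm j : ℕ) = ℓ)), algFK n C s π t j) = 0 := by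
    intro ℓ hℓt
    apply Finset.sum_eq_zero
    intro π hπ
    have h2 := (Finset.mem_filter.mp hπ).2
    simp only [algFK, h2, if_pos hℓt]
  -- split the range
  have hsplit : ∑ ℓ ∈ Finset.range n, ∑ π ∈ Finset.univ.filter
        (fun π : Equiv.Perm (Fin n) => ((π.symm j : ℕ) = ℓ)), algFK n C s π t j
      = ∑ ℓ ∈ Finset.Ico t n, ∑ π ∈ Finset.univ.filter
        (fun π : Equiv.Perm (Fin n) => ((π.symm j : ℕ) = ℓ)), algFK n C s π t j := by
    rw [Finset.range_eq_Ico,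
      ← Finset.sum_Ico_consecutive _ (Nat.zero_le t) (le_of_lt ht2)]
    have h0 : ∑ ℓ ∈ Finset.Ico 0 t, ∑ π ∈ Finset.univ.filter
        (fun π : Equiv.Perm (Fin n) => ((π.symm j : ℕ) = ℓ)), algFK n C s π t j = 0 :=
      Finset.sum_eq_zero (fun ℓ hℓ => hzero ℓ (Finset.mem_Ico.mp hℓ).2)
    rw [h0, zero_add]
  -- lower bound on the total sum
  have hmain : ∑ ℓ ∈ Finset.Ico t n, (t : ℝ) / (ℓ : ℝ) * F * gU
      ≤ ∑ π : Equiv.Perm (Fin n), algFK n C s π t j := by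
    rw [← hfib, hsplit]
    apply Finset.sum_le_sum
    intro ℓ hℓ
    rw [Finset.mem_Ico] at hℓ
    exact round_bound n C s hC hspos t ℓ ht1 hℓ.1 hℓ.2 j
  -- reindex the RHS sum
  have hreindex : ∑ ℓ ∈ Finset.Icc (t + 1) n, (t : ℝ) / ((ℓ : ℝ) - 1)
      = ∑ m ∈ Finset.Ico t n, (t : ℝ) / (m : ℝ) := by
    apply Finset.sum_nbij' (fun ℓ => ℓ - 1) (fun m => m + 1)
    · intro a ha
      rw [Finset.mem_Icc] at ha
      rw [Finset.mem_Ico]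
      omega
    · intro a ha
      rw [Finset.mem_Ico] at ha
      rw [Finset.mem_Icc]
      omega
    · intro a ha
      rw [Finset.mem_Icc] at ha
      omega
    · intro a ha
      omega
    · intro a ha
      rw [Finset.mem_Icc] at ha
      have : ((a - 1 : ℕ) : ℝ) = (a : ℝ) - 1 := by
        rw [Nat.cast_sub (by omega)]
        norm_num
      rw [this]
  -- identify RHS with a sum divided by n!
  have hNF : (n.factorial : ℝ) = N * F := by
    rw [hNdef, hFdef, ← Nat.mul_factorial_pred hn0.ne']
    push_cast
    ring
  have hRHS : gU / N * ∑ m ∈ Finset.Ico t n, (t : ℝ) / (m : ℝ)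
      = (∑ m ∈ Finset.Ico t n, (t : ℝ) / (m : ℝ) * F * gU) / (n.factorial : ℝ) := by
    rw [hNF, Finset.mul_sum, Finset.sum_div]
    apply Finset.sum_congr rfl
    intro m hm
    have hm0 : (0:ℝ) < (m:ℝ) := by
      have := (Finset.mem_Ico.mp hm).1
      exact_mod_cast lt_of_lt_of_le ht1 this
    have key : ∀ (a b c d e : ℝ), d ≠ 0 → b ≠ 0 → c ≠ 0 →
        e / b * (a / c) = a / c * d * e / (b * d) := by
      intro a b c d e hd hb hc
      field_simp
    exact key _ _ _ _ _ hFpos.ne' hNpos.ne' hm0.ne'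
  rw [ge_iff_le, hreindex, hRHS]
  apply div_le_div_of_nonneg_right hmain (by positivity)
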